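/- For J = 2, the function g(w) = (1/(μ₁w) + a)(1/(μ₂(1−w)) + a) on (0,1), with μ₁, μ₂ > 0 and a > 0, attains its unique minimum at w* = √(a₂+1)/(√(a₁+1) + √(a₂+1)), where aⱼ = aμⱼ. -/

import Mathlib

open Set

/-- Optimal weight in the unstructured two-point model: the function
`g(w) = (1/(μ₁w) + a)(1/(μ₂(1−w)) + a)` on `(0,1)` attains its unique minimum at
`w* = √(a₂+1)/(√(a₁+1) + √(a₂+1))`, where `aⱼ = a μⱼ`. -/
theorem optimal_weight_two_points (μ₁ μ₂ a : ℝ) (hμ₁ : 0 < μ₁) (hμ₂ : 0 < μ₂) (ha : 0 < a) :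
    letI g : ℝ → ℝ := fun w => (1 / (μ₁ * w) + a) * (1 / (μ₂ * (1 - w)) + a)
    letI a₁ : ℝ := a * μ₁
    letI a₂ : ℝ := a * μ₂
    letI wstar : ℝ := Real.sqrt (a₂ + 1) / (Real.sqrt (a₁ + 1) + Real.sqrt (a₂ + 1))
    wstar ∈ Set.Ioo (0 : ℝ) 1 ∧
    (∀ w ∈ Set.Ioo (0 : ℝ) 1, g wstar ≤ g w) ∧
    (∀ w ∈ Set.Ioo (0 : ℝ) 1, g w = g wstar → w = wstar) := by
  beta_reduce
  set g : ℝ → ℝ := fun w => (1 / (μ₁ * w) + a) * (1 / (μ₂ * (1 - w)) + a) with hgdef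
  set s₁ : ℝ := Real.sqrt (a * μ₁ + 1) with hs₁def
  set s₂ : ℝ := Real.sqrt (a * μ₂ + 1) with hs₂def
  set wstar : ℝ := s₂ / (s₁ + s₂) with hwsdef
  have ha₁ : (0:ℝ) < a * μ₁ + 1 := by positivity
  have ha₂ : (0:ℝ) < a * μ₂ + 1 := by positivity
  have hs₁ : 0 < s₁ := Real.sqrt_pos.mpr ha₁
  have hs₂ : 0 < s₂ := Real.sqrt_pos.mpr ha₂
  have hsq₁ : s₁ ^ 2 = a * μ₁ + 1 := Real.sq_sqrt ha₁.le
  have hsq₂ : s₂ ^ 2 = a * μ₂ + 1 := Real.sq_sqrt ha₂.le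
  have hsum : 0 < s₁ + s₂ := by linarith
  have hw0 : 0 < wstar := div_pos hs₂ hsum
  have hw1 : wstar < 1 := by
    rw [div_lt_one hsum]; linarith
  set C : ℝ := (s₁ + s₂) ^ 2 + a ^ 2 * μ₁ * μ₂ with hCdef
  -- Key identity
  have key : ∀ w : ℝ, 0 < w → w < 1 →
      g w * (μ₁ * μ₂ * w * (1 - w)) =
        (s₂ * (1 - w) - s₁ * w) ^ 2 + C * (w * (1 - w)) := by
    intro w hw hw'
    have h1w : (0:ℝ) < 1 - w := by linarith
    simp only [hgdef, hCdef]
    field_simp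
    linear_combination (-(1 - w)) * hsq₂ +
      (-w) * hsq₁
  -- value at wstar
  have hDstar : s₂ * (1 - wstar) - s₁ * wstar = 0 := by
    rw [hwsdef]
    field_simp
    ring
  have hgstar : g wstar * (μ₁ * μ₂) = C := by
    have hk := key wstar hw0 hw1
    rw [hDstar] at hk
    have hpos : (0:ℝ) < wstar * (1 - wstar) := by nlinarith
    have : g wstar * (μ₁ * μ₂) * (wstar * (1 - wstar)) = C * (wstar * (1 - wstar)) := by
      nlinarith [hk]
    exact mul_right_cancel₀ (ne_of_gt hpos) this
  refine ⟨⟨hw0, hw1⟩, ?_, ?_⟩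
  · intro w hw
    obtain ⟨hw0', hw1'⟩ := hw
    have h1w : (0:ℝ) < 1 - w := by linarith
    have hpos : (0:ℝ) < μ₁ * μ₂ * w * (1 - w) := by positivity
    have hk := key w hw0' hw1'
    have hsqnn : (0:ℝ) ≤ (s₂ * (1 - w) - s₁ * w) ^ 2 := sq_nonneg _
    have h2 : g wstar * (μ₁ * μ₂ * w * (1 - w)) = C * (w * (1 - w)) := by
      linear_combination (w * (1 - w)) * hgstar
    have : g wstar * (μ₁ * μ₂ * w * (1 - w)) ≤ g w * (μ₁ * μ₂ * w * (1 - w)) := by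
      linarith [hsqnn, hk, h2]
    exact le_of_mul_le_mul_right this hpos
  · intro w hw heq
    obtain ⟨hw0', hw1'⟩ := hw
    have h1w : (0:ℝ) < 1 - w := by linarith
    have hk := key w hw0' hw1'
    have heq' : g w = g wstar := heq
    rw [heq'] at hk
    have h2 : g wstar * (μ₁ * μ₂ * w * (1 - w)) = C * (w * (1 - w)) := by
      linear_combination (w * (1 - w)) * hgstar
    have hD : (s₂ * (1 - w) - s₁ * w) ^ 2 = 0 := by linarith [hk, h2]
    have hD0 : s₂ * (1 - w) - s₁ * w = 0 := by
      exact pow_eq_zero_iff (n := 2) (by norm_num) |>.mp hD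
    have : w * (s₁ + s₂) = s₂ := by linarith [hD0]
    rw [hwsdef]
    field_simp
    linarith [this]
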